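/- Let m ≥ 2 be a natural number and let f : ZMod m × ZMod m → ℤ be a symmetric normalized 2-cocycle with values in ℤ. Let S_m ∈ ℤ be the sum S_m = Σ_{k=0}^{m−1} f(1, k). Then the twisted product group C_g ×^f C_m (the set ℤ × ZMod m with multiplication (h₁, g₁)·(h₂, g₂) = (h₁ + h₂ + f(g₁, g₂), g₁ + g₂)) is a cyclic group if and only if gcd(S_m, m) = 1. -/

import Mathlib

/-- The twisted product `ℤ ×^f ZMod m` of the infinite cyclic group and a finite cyclic
group along a symmetric normalized 2-cocycle `f` is cyclic iff `gcd(S_m, m) = 1`, where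
`S_m = ∑_{k=0}^{m-1} f(1, k)`. -/
theorem twisted_product_infinite_cyclic_isCyclic_iff
    (m : ℕ) (hm : 2 ≤ m)
    (f : ZMod m × ZMod m → ℤ)
    (hsym : ∀ g₁ g₂ : ZMod m, f (g₁, g₂) = f (g₂, g₁))
    (hnorm : f (0, 0) = 0)
    (hcoc : ∀ g₁ g₂ g₃ : ZMod m,
      f (g₁, g₂) + f (g₁ + g₂, g₃) = f (g₂, g₃) + f (g₁, g₂ + g₃))
    (G : Type*) [Group G] (e : G ≃ ℤ × ZMod m)
    (hone : e 1 = (0, 0))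
    (hmul : ∀ x y : G,
      e (x * y) = ((e x).1 + (e y).1 + f ((e x).2, (e y).2), (e x).2 + (e y).2)) :
    IsCyclic G ↔ Int.gcd (∑ k ∈ Finset.range m, f (1, (k : ZMod m))) m = 1 := by
  haveI : NeZero m := ⟨by omega⟩
  set S : ℤ := ∑ k ∈ Finset.range m, f (1, (k : ZMod m)) with hS
  -- f (0, g) = 0
  have hf0 : ∀ g : ZMod m, f (0, g) = 0 := by
    intro g
    have h := hcoc 0 0 g
    simp only [add_zero, zero_add, hnorm] at h
    linarith
  have hf0' : ∀ g : ZMod m, f (g, 0) = 0 := fun g => (hsym g 0).trans (hf0 g)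
  have hnormP : f 0 = 0 := hnorm
  -- commutativity
  have hcomm : ∀ x y : G, x * y = y * x := by
    intro x y
    apply e.injective
    rw [hmul, hmul, hsym]
    exact Prod.ext (by ring) (add_comm _ _)
  letI : CommGroup G := { (inferInstance : Group G) with mul_comm := hcomm }
  -- multiplication on e.symm coordinates
  have key : ∀ (p q : ℤ) (g₁ g₂ : ZMod m),
      e.symm (p, g₁) * e.symm (q, g₂) = e.symm (p + q + f (g₁, g₂), g₁ + g₂) := by
    intro p q g₁ g₂
    apply e.injective
    rw [hmul]
    simp [e.apply_symm_apply]
  have hone' : (1 : G) = e.symm (0, 0) := by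
    apply e.injective; simp [hone]
  set t : G := e.symm (1, 0) with htdef
  set a : G := e.symm (0, 1) with hadef
  have ht : ∀ n : ℤ, t ^ n = e.symm (n, 0) := by
    intro n
    induction n using Int.induction_on with
    | zero => simpa using hone'
    | succ n ih =>
      rw [zpow_add_one, ih, htdef, key]
      simp [hnormP, hnorm]
    | pred n ih =>
      have hmul1 : t * e.symm (-1, 0) = 1 := by
        rw [htdef, key]
        simp [hnormP]
        rw [hnorm, hone']
      have hinv : t⁻¹ = e.symm (-1, 0) := inv_eq_of_mul_eq_one_right hmul1
      rw [zpow_sub_one, ih, hinv, key]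
      simp [hnormP, hnorm]
      ring_nf
  set c : ℕ → ℤ := fun k => ∑ j ∈ Finset.range k, f (1, (j : ZMod m)) with hcdef
  have ha : ∀ k : ℕ, a ^ k = e.symm (c k, (k : ZMod m)) := by
    intro k
    induction k with
    | zero => simpa [hcdef] using hone'
    | succ k ih =>
      rw [pow_succ, ih, hadef, key, hcdef]
      simp only [Finset.sum_range_succ, Nat.cast_succ, add_zero]
      rw [hsym ((k : ZMod m)) 1]
  have hta : ∀ (p : ℤ) (k : ℕ), t ^ p * a ^ k = e.symm (p + c k, (k : ZMod m)) := by
    intro p k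
    rw [ht, ha, key]
    simp [hf0]
  have hcm : c m = S := rfl
  have ham : a ^ m = t ^ S := by
    rw [ha, ht, hcm]
    simp [ZMod.natCast_self]
  have hamz : a ^ (m : ℤ) = t ^ S := by rw [zpow_natCast, ham]
  -- decomposition
  have hdec : ∀ z : G, ∃ (p : ℤ) (k : ℕ), z = t ^ p * a ^ k := by
    intro z
    refine ⟨(e z).1 - c ((e z).2.val), (e z).2.val, ?_⟩
    rw [hta]
    apply e.injective
    simp [ZMod.natCast_rightInverse (e z).2]
  constructor
  · -- cyclic → gcd = 1
    intro hcyc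
    by_contra hne
    set d : ℕ := Int.gcd S m with hddef
    have hdm : d ∣ m := by
      have := Int.gcd_dvd_right (a := S) (b := (m : ℤ))
      exact_mod_cast this
    have hd0 : d ≠ 0 := by
      intro h
      have h2 : (m : ℤ) = 0 := (Int.gcd_eq_zero_iff.mp h).2
      omega
    have hd2 : 2 ≤ d := by omega
    set k : ℕ := m / d with hkdef
    have hkd : k * d = m := Nat.div_mul_cancel hdm
    have hk0 : 0 < k :=
      Nat.div_pos (Nat.le_of_dvd (by omega) hdm) (by omega)
    have hkm : k < m := by
      have := Nat.div_lt_self (by omega : 0 < m) (by omega : 1 < d)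
      simpa [hkdef] using this
    have hdS : (d : ℤ) ∣ S := Int.gcd_dvd_left _ _
    set s : ℤ := S / (d : ℤ) with hsdef
    have hds : (d : ℤ) * s = S := Int.mul_ediv_cancel' hdS
    set y : G := t ^ (-s) * a ^ k with hydef
    have hyd : y ^ d = 1 := by
      rw [hydef, mul_pow, ← zpow_natCast (t ^ (-s)) d, ← zpow_mul, ← pow_mul, hkd, ham,
        ← zpow_add]
      have : -s * (d : ℤ) + S = 0 := by rw [← hds]; ring
      rw [this, zpow_zero]
    have hy1 : y ≠ 1 := by
      intro h
      have : e y = e 1 := by rw [h]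
      rw [hydef, hta, hone, e.apply_symm_apply] at this
      have h2 : ((k : ZMod m)) = 0 := congrArg Prod.snd this
      have := (ZMod.natCast_eq_zero_iff k m).mp h2
      have := Nat.le_of_dvd hk0 this
      omega
    haveI : Infinite G :=
      @Infinite.of_injective G (ℤ × ZMod m) inferInstance e.symm e.symm.injective
    obtain ⟨g, hg⟩ := hcyc.exists_generator
    obtain ⟨n, hn⟩ := Subgroup.mem_zpowers_iff.mp (hg y)
    have hn0 : n ≠ 0 := by
      intro h
      rw [h, zpow_zero] at hn
      exact hy1 hn.symm
    have hgnd : g ^ (n * (d : ℤ)) = 1 := by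
      rw [zpow_mul, hn, zpow_natCast, hyd]
    have hfin : IsOfFinOrder g := by
      refine isOfFinOrder_iff_pow_eq_one.mpr ⟨(n * (d : ℤ)).natAbs, ?_, ?_⟩
      · have : n * (d : ℤ) ≠ 0 := by
          apply mul_ne_zero hn0
          exact_mod_cast hd0
        exact Int.natAbs_pos.mpr this
      · rcases Int.natAbs_eq (n * (d : ℤ)) with h | h
        · rw [← zpow_natCast, ← h, hgnd]
        · rw [← zpow_natCast, ← neg_neg ((n * (d : ℤ)).natAbs : ℤ), ← h, zpow_neg, hgnd,
            inv_one]
    have hfinG : (Set.univ : Set G).Finite := by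
      have h1 := hfin.finite_zpowers
      have h2 : (Set.univ : Set G) ⊆ (Subgroup.zpowers g : Set G) := fun z _ => hg z
      exact h1.subset h2
    exact Set.infinite_univ hfinG
  · -- gcd = 1 → cyclic
    intro hgcd
    obtain ⟨u, v, huv⟩ := Int.isCoprime_iff_gcd_eq_one.mpr hgcd
    -- huv : u * S + v * m = 1
    set x : G := t ^ v * a ^ u with hxdef
    have haux : ∀ w : ℤ, a ^ (w * (m : ℤ)) = t ^ (S * w) := by
      intro w
      rw [mul_comm, zpow_mul, hamz, ← zpow_mul]
    have hxm : x ^ (m : ℤ) = t := by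
      rw [hxdef, mul_zpow, ← zpow_mul, ← zpow_mul, haux u, ← zpow_add]
      have : v * (m : ℤ) + S * u = 1 := by linarith [huv]
      rw [this, zpow_one]
    have hxS : x ^ S = a := by
      rw [hxdef, mul_zpow, ← zpow_mul, ← zpow_mul]
      have hu : u * S = 1 - v * (m : ℤ) := by linarith [huv]
      rw [hu, zpow_sub, zpow_one, haux v, mul_comm S v, mul_comm a, mul_inv_cancel_left]
    constructor
    refine ⟨x, fun z => ?_⟩
    obtain ⟨p, k, hz⟩ := hdec z
    refine Subgroup.mem_zpowers_iff.mpr ⟨(m : ℤ) * p + S * k, ?_⟩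
    rw [zpow_add, zpow_mul, zpow_mul, hxm, hxS, hz, zpow_natCast]
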